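/- Let α ∈ (0, π/2], β ∈ [0, α/2], and let z be a nonzero complex number with |Im(z)| ≤ π and −β ≤ arg(z) < α − β. Then −β ≤ arg(1 − e^{−z}) − arg(1 + e^{−z}) < α − β. -/

import Mathlib

open Complex Real

private lemma arg_eq_arctan_of_re_pos {w : ℂ} (h : 0 < w.re) :
    Complex.arg w = Real.arctan (w.im / w.re) := by
  have h2 : |Complex.arg w| < Real.pi / 2 :=
    Complex.abs_arg_lt_pi_div_two_iff.mpr (Or.inl h)
  obtain ⟨h3, h4⟩ := abs_lt.mp h2
  rw [← Complex.tan_arg w, Real.arctan_tan (by linarith) h4]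

set_option maxHeartbeats 1000000 in
theorem arg_sub_arg_shifted_bounds (α β : ℝ) (hα : 0 < α) (hα' : α ≤ Real.pi / 2)
    (hβ : 0 ≤ β) (hβ' : β ≤ α / 2) (z : ℂ) (hz : z ≠ 0) (him : |z.im| ≤ Real.pi)
    (harg₁ : -β ≤ Complex.arg z) (harg₂ : Complex.arg z < α - β) :
    -β ≤ Complex.arg (1 - Complex.exp (-z)) - Complex.arg (1 + Complex.exp (-z)) ∧
      Complex.arg (1 - Complex.exp (-z)) - Complex.arg (1 + Complex.exp (-z)) < α - β := by
  have hπ : 0 < Real.pi := Real.pi_pos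
  set x := z.re with hxdef
  set y := z.im with hydef
  have hargabs : |Complex.arg z| < Real.pi / 2 := by
    rw [abs_lt]; constructor <;> linarith
  have hxpos : 0 < x := by
    rcases Complex.abs_arg_lt_pi_div_two_iff.mp hargabs with h | h
    · exact h
    · exact absurd h hz
  set s := Real.exp (-x) with hsdef
  have hs0 : 0 < s := Real.exp_pos _
  have hs1 : s < 1 := by
    calc s = Real.exp (-x) := rfl
    _ < Real.exp 0 := Real.exp_lt_exp.mpr (by linarith)
    _ = 1 := Real.exp_zero
  have hwre : (Complex.exp (-z)).re = s * Real.cos y := by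
    rw [Complex.exp_re]; simp [hsdef]; rfl
  have hwim : (Complex.exp (-z)).im = -(s * Real.sin y) := by
    rw [Complex.exp_im]; simp [hsdef]; rfl
  set u : ℂ := 1 - Complex.exp (-z) with hudef
  set v : ℂ := 1 + Complex.exp (-z) with hvdef
  have hure : u.re = 1 - s * Real.cos y := by simp [hudef, hwre]
  have huim : u.im = s * Real.sin y := by simp [hudef, hwim]
  have hvre : v.re = 1 + s * Real.cos y := by simp [hvdef, hwre]
  have hvim : v.im = -(s * Real.sin y) := by simp [hvdef, hwim]
  have hcos1 := Real.cos_le_one y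
  have hcos2 := Real.neg_one_le_cos y
  have hmc1 : s * Real.cos y ≤ s * 1 := mul_le_mul_of_nonneg_left hcos1 hs0.le
  have hmc2 : s * (-1) ≤ s * Real.cos y := mul_le_mul_of_nonneg_left hcos2 hs0.le
  have hmc3 : s * (-1) = -s := by ring
  have hure' : 0 < u.re := by rw [hure]; linarith [hmc1]
  have hvre' : 0 < v.re := by rw [hvre]; linarith [hmc2, hmc3.symm.le]
  have hvne : v ≠ 0 := by intro h; rw [h] at hvre'; simp at hvre'
  have hune : u ≠ 0 := by intro h; rw [h] at hure'; simp at hure'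
  set T : ℂ := u / v with hTdef
  set N : ℝ := Complex.normSq v with hNdef
  have hN : 0 < N := Complex.normSq_pos.mpr hvne
  have hpyt := Real.sin_sq_add_cos_sq y
  have hs2 : 0 < 1 - s ^ 2 := by
    have : s ^ 2 < 1 := pow_lt_one₀ hs0.le hs1 (by norm_num)
    linarith
  have hTre : T.re = (1 - s ^ 2) / N := by
    rw [hTdef, Complex.div_re, hure, huim, hvre, hvim, ← hNdef, ← add_div]
    congr 1; linear_combination (-(s ^ 2)) * hpyt
  have hTim : T.im = 2 * s * Real.sin y / N := by
    rw [hTdef, Complex.div_im, hure, huim, hvre, hvim, ← hNdef, div_sub_div_same]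
    congr 1; ring
  have hTre' : 0 < T.re := by rw [hTre]; positivity
  have hTne : T ≠ 0 := by intro h; rw [h] at hTre'; simp at hTre'
  -- arg u - arg v = arg T
  have hTv : T * v = u := div_mul_cancel₀ u hvne
  have habsT := abs_lt.mp (Complex.abs_arg_lt_pi_div_two_iff.mpr (Or.inl hTre'))
  have habsV := abs_lt.mp (Complex.abs_arg_lt_pi_div_two_iff.mpr (Or.inl hvre'))
  have hmul : Complex.arg (T * v) = Complex.arg T + Complex.arg v :=
    Complex.arg_mul hTne hvne ⟨by linarith [habsT.1, habsV.1], by linarith [habsT.2, habsV.2]⟩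
  have hsub : Complex.arg u - Complex.arg v = Complex.arg T := by
    rw [← hTv, hmul]; ring
  -- arg T = arctan (sin y / sinh x)
  set S : ℝ := Real.sinh x with hSdef
  have hSpos : 0 < S := Real.sinh_pos_iff.mpr hxpos
  have hxS : x ≤ S := (Real.self_lt_sinh_iff.mpr hxpos).le
  have hSs : S = (s⁻¹ - s) / 2 := by
    rw [hSdef, Real.sinh_eq, hsdef, Real.exp_neg, inv_inv]
  have hsne : s ≠ 0 := ne_of_gt hs0
  have hNne : N ≠ 0 := ne_of_gt hN
  have hSne : S ≠ 0 := ne_of_gt hSpos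
  have hkey : 1 - s ^ 2 = 2 * s * S := by
    rw [hSs]; field_simp
  have hargT : Complex.arg T = Real.arctan (Real.sin y / S) := by
    rw [arg_eq_arctan_of_re_pos hTre', hTim, hTre]
    congr 1
    rw [hkey]
    field_simp
  have hargz : Complex.arg z = Real.arctan (y / x) :=
    arg_eq_arctan_of_re_pos hxpos
  rw [hsub, hargT]
  obtain ⟨hym, hyM⟩ := abs_le.mp him
  rcases le_or_gt 0 y with hy0 | hy0
  · -- y ≥ 0 : 0 ≤ arctan(sin y / S) ≤ arg z
    have hsin0 : 0 ≤ Real.sin y := Real.sin_nonneg_of_nonneg_of_le_pi hy0 hyM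
    have hsiny : Real.sin y ≤ y := Real.sin_le hy0
    have hle : Real.sin y / S ≤ y / x := by
      rw [div_le_div_iff₀ hSpos hxpos]
      have h1 : Real.sin y * x ≤ y * x := mul_le_mul_of_nonneg_right hsiny hxpos.le
      have h2 : y * x ≤ y * S := mul_le_mul_of_nonneg_left hxS hy0
      linarith
    constructor
    · have : (0 : ℝ) ≤ Real.arctan (Real.sin y / S) := by
        rw [← Real.arctan_zero]
        exact Real.arctan_strictMono.monotone (by positivity)
      linarith
    · have : Real.arctan (Real.sin y / S) ≤ Complex.arg z := by
        rw [hargz]; exact Real.arctan_strictMono.monotone hle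
      linarith
  · -- y < 0 : arg z ≤ arctan(sin y / S) ≤ 0
    have hsin0 : Real.sin y ≤ 0 := Real.sin_nonpos_of_nonpos_of_neg_pi_le hy0.le hym
    have hsiny : y ≤ Real.sin y := Real.le_sin hy0.le
    have hle : y / x ≤ Real.sin y / S := by
      rw [div_le_div_iff₀ hxpos hSpos]
      have h1 : y * S ≤ y * x := mul_le_mul_of_nonpos_left hxS hy0.le
      have h2 : y * x ≤ Real.sin y * x := mul_le_mul_of_nonneg_right hsiny hxpos.le
      linarith
    constructor
    · have : Complex.arg z ≤ Real.arctan (Real.sin y / S) := by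
        rw [hargz]; exact Real.arctan_strictMono.monotone hle
      linarith
    · have : Real.arctan (Real.sin y / S) ≤ 0 := by
        rw [← Real.arctan_zero]
        exact Real.arctan_strictMono.monotone (div_nonpos_iff.mpr (Or.inr ⟨hsin0, hSpos.le⟩))
      linarith
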